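/- Let p ∈ (−1, 0) with p ≠ −1/2, and let e_1, e_2, e_3, e_4 ∈ (0,1) be pairwise distinct. Then the 4×4 real matrix whose r-th column is (1, e_r, 1/(1 + p − p·e_r), 1/((p+1)·e_r − p))ᵀ is invertible. (Under the hypotheses both denominators 1 + p − p·e_r and (p+1)·e_r − p are strictly positive.) -/

import Mathlib

open Polynomial in
/-- The matrix `F*` arising in Case 1 of the proof that 2-PL is identifiable
from ranked top-2 plus 2-way data: for `p ∈ (-1,0)` with `p ≠ -1/2` and
pairwise distinct `e_1, …, e_4 ∈ (0,1)`, the 4×4 matrix whose `r`-th column is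
`(1, e_r, 1/(1 + p - p e_r), 1/((p+1) e_r - p))ᵀ` is invertible. -/
theorem Fstar_invertible
    (p : ℝ) (hp1 : -1 < p) (hp0 : p < 0) (hph : p ≠ -(1/2))
    (e : Fin 4 → ℝ) (he : ∀ r, 0 < e r ∧ e r < 1)
    (hdist : Function.Injective e) :
    IsUnit (Matrix.of fun (i r : Fin 4) =>
      ![(1 : ℝ), e r, 1 / (1 + p - p * e r), 1 / ((p + 1) * e r - p)] i) := by
  have hpne : p ≠ 0 := ne_of_lt hp0
  have hp1ne : p + 1 ≠ 0 := by intro h; linarith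
  have h2p1 : 2 * p + 1 ≠ 0 := by intro h; apply hph; linarith
  have hd1 : ∀ r, (1 + p - p * e r) ≠ 0 := by
    intro r; nlinarith [(he r).1, (he r).2]
  have hd2 : ∀ r, ((p + 1) * e r - p) ≠ 0 := by
    intro r; nlinarith [(he r).1, (he r).2]
  set M : Matrix (Fin 4) (Fin 4) ℝ := Matrix.of fun (i r : Fin 4) =>
      ![(1 : ℝ), e r, 1 / (1 + p - p * e r), 1 / ((p + 1) * e r - p)] i with hM
  rw [Matrix.isUnit_iff_isUnit_det, isUnit_iff_ne_zero]
  intro hdet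
  have hdetT : M.transpose.det = 0 := by rw [Matrix.det_transpose]; exact hdet
  obtain ⟨v, hvne, hv⟩ := (Matrix.exists_mulVec_eq_zero_iff).mpr hdetT
  -- the linear relation at each node
  have hrel : ∀ r : Fin 4,
      v 0 + e r * v 1 + (1 / (1 + p - p * e r)) * v 2
        + (1 / ((p + 1) * e r - p)) * v 3 = 0 := by
    intro r
    have := congrFun hv r
    simpa [Matrix.mulVec, dotProduct, Fin.sum_univ_four, hM,
      Matrix.transpose_apply, Matrix.of_apply] using this
  -- cleared-denominator relation
  have hrel' : ∀ r : Fin 4,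
      (v 0 + v 1 * e r) * ((1 + p - p * e r) * ((p + 1) * e r - p))
        + v 2 * ((p + 1) * e r - p) + v 3 * (1 + p - p * e r) = 0 := by
    intro r
    have h := hrel r
    have h1 : (1 + p - p * e r) * (1 / (1 + p - p * e r)) = 1 := mul_one_div_cancel (hd1 r)
    have h2 : ((p + 1) * e r - p) * (1 / ((p + 1) * e r - p)) = 1 := mul_one_div_cancel (hd2 r)
    linear_combination ((1 + p - p * e r) * ((p + 1) * e r - p)) * h
      - v 2 * ((p + 1) * e r - p) * h1 - v 3 * (1 + p - p * e r) * h2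
  -- the cubic polynomial
  set a3 : ℝ := v 1 * (-(p * (p + 1))) with ha3d
  set a2 : ℝ := v 0 * (-(p * (p + 1))) + v 1 * ((1 + p) * (p + 1) + p ^ 2) with ha2d
  set a1 : ℝ := v 0 * ((1 + p) * (p + 1) + p ^ 2) + v 1 * (-((1 + p) * p))
      + v 2 * (p + 1) + v 3 * (-p) with ha1d
  set a0 : ℝ := v 0 * (-((1 + p) * p)) + v 2 * (-p) + v 3 * (1 + p) with ha0d
  set P : ℝ[X] := C a3 * X ^ 3 + C a2 * X ^ 2 + C a1 * X + C a0 with hP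
  have hPeval : ∀ r : Fin 4, P.eval (e r) = 0 := by
    intro r
    have h := hrel' r
    simp only [hP, eval_add, eval_mul, eval_pow, eval_C, eval_X]
    rw [ha3d, ha2d, ha1d, ha0d]
    linear_combination h
  have hPdeg : P.natDegree < 4 := by
    have : P.natDegree ≤ 3 := by rw [hP]; compute_degree
    omega
  have hP0 : P = 0 :=
    Polynomial.eq_zero_of_natDegree_lt_card_of_eval_eq_zero P hdist hPeval
      (by simpa using hPdeg)
  have hc : ∀ k : ℕ, P.coeff k = 0 := by intro k; rw [hP0]; simp
  have c3 : a3 = 0 := by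
    have := hc 3
    simpa [hP, Polynomial.coeff_add, Polynomial.coeff_C_mul,
      Polynomial.coeff_X_pow, Polynomial.coeff_X, Polynomial.coeff_C] using this
  have c2 : a2 = 0 := by
    have := hc 2
    simpa [hP, Polynomial.coeff_add, Polynomial.coeff_C_mul,
      Polynomial.coeff_X_pow, Polynomial.coeff_X, Polynomial.coeff_C] using this
  have c1 : a1 = 0 := by
    have := hc 1
    simpa [hP, Polynomial.coeff_add, Polynomial.coeff_C_mul,
      Polynomial.coeff_X_pow, Polynomial.coeff_X, Polynomial.coeff_C] using this
  have c0 : a0 = 0 := by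
    have := hc 0
    simpa [hP, Polynomial.coeff_add, Polynomial.coeff_C_mul,
      Polynomial.coeff_X_pow, Polynomial.coeff_X, Polynomial.coeff_C] using this
  have hpp1 : p * (p + 1) ≠ 0 := mul_ne_zero hpne hp1ne
  have hv1 : v 1 = 0 := by
    rw [ha3d] at c3
    rcases mul_eq_zero.mp c3 with h | h
    · exact h
    · exact absurd (neg_eq_zero.mp h) hpp1
  have hv0 : v 0 = 0 := by
    rw [ha2d, hv1] at c2
    simp only [zero_mul, add_zero] at c2
    rcases mul_eq_zero.mp c2 with h | h
    · exact h
    · exact absurd (neg_eq_zero.mp h) hpp1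
  have c1' : v 2 * (p + 1) - v 3 * p = 0 := by
    rw [ha1d, hv0, hv1] at c1; linarith [c1]
  have c0' : v 2 * (-p) + v 3 * (1 + p) = 0 := by
    rw [ha0d, hv0] at c0; linarith [c0]
  have hv2 : v 2 = 0 := by
    have key : v 2 * (2 * p + 1) = 0 := by linear_combination (1 + p) * c1' + p * c0'
    rcases mul_eq_zero.mp key with h | h
    · exact h
    · exact absurd h h2p1
  have hv3 : v 3 = 0 := by
    rw [hv2] at c0'
    simp only [zero_mul, zero_add] at c0'
    rcases mul_eq_zero.mp c0' with h | h
    · exact h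
    · exact absurd h (by intro h'; linarith)
  apply hvne
  funext r
  fin_cases r <;> simpa using (by assumption : _ = (0:ℝ))
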